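/- Let 𝓘 be a maximal nested collection on the vertex set V of a finite tree Γ, and let S ⊆ V be a nonempty connected set that is rooted with respect to 𝓘. Then for every I ∈ 𝓘 there is at most one vertex v ∈ S such that I and {v} are incompatible. -/

import Mathlib

namespace Paper

variable {V : Type*}

/-- The subgraph of `G` induced on `S` is connected (any two vertices of `S` are joined
by a walk inside `S`). -/
def Conn (G : SimpleGraph V) (S : Set V) : Prop := (G.induce S).Preconnected

/-- `C` is a connected component of (the subgraph of `G` induced on) `U`:
a maximal nonempty connected subset of `U`. -/
def IsCompOf (G : SimpleGraph V) (C U : Set V) : Prop :=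
  C.Nonempty ∧ C ⊆ U ∧ Conn G C ∧
    ∀ D : Set V, C ⊆ D → D ⊆ U → Conn G D → D = C

/-- A nested collection on (the vertex set of) `G`: a family of nonempty connected
subsets such that (1) any two members are nested or disjoint, and (2) the connected
components of the union of any pairwise disjoint subfamily are exactly the members of
that subfamily. -/
def Nested (G : SimpleGraph V) (𝓘 : Set (Set V)) : Prop :=
  (∀ S ∈ 𝓘, S.Nonempty ∧ Conn G S) ∧
  (∀ S ∈ 𝓘, ∀ T ∈ 𝓘, S ⊆ T ∨ T ⊆ S ∨ S ∩ T = ∅) ∧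
  (∀ 𝓙 ⊆ 𝓘, (𝓙.Pairwise fun A B => A ∩ B = ∅) →
    ∀ C : Set V, IsCompOf G C (⋃₀ 𝓙) ↔ C ∈ 𝓙)

/-- A maximal nested collection: a nested collection whose union is all of `V` and
which is not properly contained in any other nested collection. -/
def MaxNested (G : SimpleGraph V) (𝓘 : Set (Set V)) : Prop :=
  Nested G 𝓘 ∧ ⋃₀ 𝓘 = Set.univ ∧
    ∀ 𝓙 : Set (Set V), Nested G 𝓙 → 𝓘 ⊆ 𝓙 → 𝓙 = 𝓘

/-- `Iv` assigns to each vertex `v` the smallest element of `𝓘` containing `v`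
(denoted `I_v`). -/
def IsLeastContaining (𝓘 : Set (Set V)) (Iv : V → Set V) : Prop :=
  ∀ v : V, Iv v ∈ 𝓘 ∧ v ∈ Iv v ∧ ∀ J ∈ 𝓘, v ∈ J → Iv v ⊆ J

/-- The vertex set `[x,y]` of the unique path in a tree `G` from `x` to `y`:
the vertices lying on every path from `x` to `y`. -/
def interval (G : SimpleGraph V) (x y : V) : Set V :=
  {u | ∀ p : G.Walk x y, p.IsPath → u ∈ p.support}

/-- `S` is rooted with respect to the nested collection (with least-member function
`Iv`): `S` is nonempty, connected, and, `m` denoting the unique element of `S` with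
`S ⊆ I_m`, for all `i, j ∈ S` one has `i ∈ I_j` iff `j ∈ [i, m]`. -/
def Rooted (G : SimpleGraph V) (Iv : V → Set V) (S : Set V) : Prop :=
  S.Nonempty ∧ Conn G S ∧
    ∃ m ∈ S, S ⊆ Iv m ∧ ∀ i ∈ S, ∀ j ∈ S, (i ∈ Iv j ↔ j ∈ interval G i m)

/-- `S̄ := {v ∈ S : I_v ⊄ S}`. -/
def bar (Iv : V → Set V) (S : Set V) : Set V := {v ∈ S | ¬ Iv v ⊆ S}

/-- `S` is weakly rooted: `S` is nonempty, connected, and either `S̄ = ∅` or `S̄` is a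
(nonempty) connected rooted set. -/
def WeaklyRooted (G : SimpleGraph V) (Iv : V → Set V) (S : Set V) : Prop :=
  S.Nonempty ∧ Conn G S ∧ (bar Iv S = ∅ ∨ Rooted G Iv (bar Iv S))

/-- Two (nonempty connected) subsets `I`, `J` are compatible if `I ⊆ J`, or `J ⊆ I`, or
they are disjoint and no edge of `G` joins a vertex of `I` to a vertex of `J`. -/
def Compatible (G : SimpleGraph V) (I J : Set V) : Prop :=
  I ⊆ J ∨ J ⊆ I ∨ (I ∩ J = ∅ ∧ ∀ a ∈ I, ∀ b ∈ J, ¬ G.Adj a b)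

end Paper


section Aux

open SimpleGraph

variable {V : Type*} {G : SimpleGraph V}

/-- In a tree, any vertex on some path between `v` and `w` lies in the interval. -/
lemma mem_interval_of_path (hG : G.IsTree) {v w c : V} (p : G.Walk v w)
    (hp : p.IsPath) (hc : c ∈ p.support) : c ∈ Paper.interval G v w := by
  intro q hq
  rwa [(hG.existsUnique_path v w).unique hq hp]

/-- A connected subset yields, for any two of its members, a walk in `G` with support
inside the subset. -/
lemma exists_walk_of_conn {S : Set V} (hS : Paper.Conn G S) {v w : V}
    (hv : v ∈ S) (hw : w ∈ S) :
    ∃ p : G.Walk v w, ∀ c ∈ p.support, c ∈ S := by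
  obtain ⟨q⟩ := hS ⟨v, hv⟩ ⟨w, hw⟩
  refine ⟨q.map (SimpleGraph.Embedding.induce S).toHom, ?_⟩
  intro c hc
  change c ∈ (q.map (SimpleGraph.Embedding.induce S).toHom).support at hc
  rw [SimpleGraph.Walk.support_map, List.mem_map] at hc
  obtain ⟨⟨x, hx⟩, -, rfl⟩ := hc
  exact hx

/-- In a tree, the interval between two members of a connected set lies in the set. -/
lemma interval_subset_of_conn (hG : G.IsTree) {S : Set V} (hS : Paper.Conn G S)
    {v w : V} (hv : v ∈ S) (hw : w ∈ S) : Paper.interval G v w ⊆ S := by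
  classical
  intro c hc
  obtain ⟨p, hp⟩ := exists_walk_of_conn hS hv hw
  exact hp c (p.support_bypass_subset (hc p.bypass p.bypass_isPath))

end Aux

/-- Let `𝓘` be a maximal nested collection on the vertex set `V` of a finite tree `Γ`,
and let `S ⊆ V` be a nonempty connected set that is rooted with respect to `𝓘`. Then for
every `I ∈ 𝓘` there is at most one vertex `v ∈ S` such that `I` and `{v}` are
incompatible. -/
theorem statement_2 {V : Type*} [Fintype V] (G : SimpleGraph V) (hG : G.IsTree)
    (𝓘 : Set (Set V)) (h𝓘 : Paper.MaxNested G 𝓘)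
    (Iv : V → Set V) (hIv : Paper.IsLeastContaining 𝓘 Iv)
    (S : Set V) (hS : Paper.Rooted G Iv S) :
    ∀ I ∈ 𝓘, ∀ v ∈ S, ∀ w ∈ S,
      ¬ Paper.Compatible G I {v} → ¬ Paper.Compatible G I {w} → v = w := by
  classical
  intro I hI v hv w hw hcv hcw
  by_contra hne
  -- extract the consequences of incompatibility
  have hxI : ∀ x : V, ¬ Paper.Compatible G I {x} → x ∉ I ∧ ∃ a ∈ I, G.Adj a x := by
    intro x hx
    rw [Paper.Compatible, not_or, not_or] at hx
    obtain ⟨-, h2, h3⟩ := hx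
    have hxI : x ∉ I := fun h => h2 (Set.singleton_subset_iff.mpr h)
    refine ⟨hxI, ?_⟩
    by_contra hno
    push_neg at hno
    refine h3 ⟨?_, ?_⟩
    · ext y; simp only [Set.mem_inter_iff, Set.mem_singleton_iff, Set.mem_empty_iff_false,
        iff_false, not_and]
      rintro hy rfl; exact hxI hy
    · rintro a ha b rfl
      exact hno a ha
  obtain ⟨hvI, a, haI, hav⟩ := hxI v hcv
  obtain ⟨hwI, b, hbI, hbw⟩ := hxI w hcw
  -- connectivity of I gives a walk from a to b inside I
  have hIconn : Paper.Conn G I := (h𝓘.1.1 I hI).2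
  obtain ⟨q0, hq0⟩ := exists_walk_of_conn hIconn haI hbI
  set Q := q0.bypass with hQdef
  have hQpath : Q.IsPath := q0.bypass_isPath
  have hQsub : ∀ c ∈ Q.support, c ∈ I := fun c hc => hq0 c (q0.support_bypass_subset hc)
  -- assemble the path v - a - ... - b - w
  have hwa : w ∉ Q.support := fun h => hwI (hQsub w h)
  have hQc : (Q.concat hbw).IsPath := by
    rw [← SimpleGraph.Walk.isPath_reverse_iff, SimpleGraph.Walk.reverse_concat]
    refine SimpleGraph.Walk.IsPath.cons (by rwa [SimpleGraph.Walk.isPath_reverse_iff]) ?_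
    rwa [SimpleGraph.Walk.support_reverse, List.mem_reverse]
  have hvQc : v ∉ (Q.concat hbw).support := by
    rw [SimpleGraph.Walk.support_concat, List.mem_append]
    rintro (h | h)
    · exact hvI (hQsub v h)
    · simp only [List.mem_singleton] at h; exact hne h
  have hWpath : (SimpleGraph.Walk.cons hav.symm (Q.concat hbw)).IsPath :=
    SimpleGraph.Walk.IsPath.cons hQc hvQc
  set W := SimpleGraph.Walk.cons hav.symm (Q.concat hbw) with hWdef
  have haW : a ∈ W.support := by
    rw [hWdef, SimpleGraph.Walk.support_cons, List.mem_cons]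
    right
    rw [SimpleGraph.Walk.support_concat, List.mem_append]
    exact Or.inl Q.start_mem_support
  -- a lies on the tree path from v to w
  have haInt : a ∈ Paper.interval G v w := mem_interval_of_path hG W hWpath haW
  -- rootedness data
  obtain ⟨hSne, hSconn, m, hmS, hSm, hroot⟩ := hS
  have haS : a ∈ S := interval_subset_of_conn hG hSconn hv hw haInt
  -- a lies on the path from v to m or on the path from w to m
  obtain ⟨p, hp, -⟩ := hG.existsUnique_path v m
  obtain ⟨q, hq, -⟩ := hG.existsUnique_path w m
  have hmem : a ∈ p.support ∨ a ∈ q.support := by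
    have hR : a ∈ (p.append q.reverse).support := by
      have := haInt (p.append q.reverse).bypass (p.append q.reverse).bypass_isPath
      exact (p.append q.reverse).support_bypass_subset this
    rw [SimpleGraph.Walk.mem_support_append_iff] at hR
    rcases hR with h | h
    · exact Or.inl h
    · rw [SimpleGraph.Walk.support_reverse, List.mem_reverse] at h
      exact Or.inr h
  have hIva : Iv a ⊆ I := (hIv a).2.2 I hI haI
  rcases hmem with h | h
  · have : v ∈ Iv a := (hroot v hv a haS).mpr (mem_interval_of_path hG p hp h)
    exact hvI (hIva this)
  · have : w ∈ Iv a := (hroot w hw a haS).mpr (mem_interval_of_path hG q hq h)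
    exact hwI (hIva this)
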